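/- For every integer n ≥ 1, |Q_{4,4}(T, (4n+1)×(4n+2))| = |Q_{1,2}(T, (4n+7)×(4n+7))|. -/

import Mathlib

/-- The 16-letter alphabet 𝒜 = {A,…,P}. -/
inductive A16 : Type
  | A | B | C | D | E | F | G | H | I | J | K | L | M | N | O | P
  deriving DecidableEq

/-- The 2×2 block substitution μ on 𝒜 (rows top to bottom). -/
def mu : A16 → Fin 2 → Fin 2 → A16
  | .A => ![![.A, .F], ![.G, .C]]
  | .B => ![![.A, .F], ![.H, .D]]
  | .C => ![![.B, .E], ![.G, .C]]
  | .D => ![![.B, .E], ![.H, .D]]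
  | .E => ![![.A, .N], ![.G, .K]]
  | .F => ![![.A, .N], ![.H, .L]]
  | .G => ![![.B, .M], ![.G, .K]]
  | .H => ![![.B, .M], ![.H, .L]]
  | .I => ![![.I, .F], ![.O, .C]]
  | .J => ![![.I, .F], ![.P, .D]]
  | .K => ![![.J, .E], ![.O, .C]]
  | .L => ![![.J, .E], ![.P, .D]]
  | .M => ![![.I, .N], ![.O, .K]]
  | .N => ![![.I, .N], ![.P, .L]]
  | .O => ![![.J, .M], ![.O, .K]]
  | .P => ![![.J, .M], ![.P, .L]]

/-- Entry version of μ, indexed by arbitrary naturals (via mod 2). -/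
def muE (x : A16) (r c : ℕ) : A16 :=
  mu x ⟨r % 2, by omega⟩ ⟨c % 2, by omega⟩

/-- `superE n x` is the supertile μⁿ(x), a 2ⁿ×2ⁿ array over 𝒜,
given as a total function on ℕ × ℕ (only indices < 2ⁿ are relevant). -/
def superE : ℕ → A16 → ℕ → ℕ → A16
  | 0, x, _, _ => x
  | n + 1, x, r, c => muE (superE n x (r / 2) (c / 2)) r c

/-- The supertile T_k = μᵏ(N). -/
def Tfun (k : ℕ) : ℕ → ℕ → A16 := superE k .N

/-- An m×n pattern over the alphabet α. -/
abbrev Pat (α : Type) (m n : ℕ) := Fin m → Fin n → α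

/-- The set of m×n patterns occurring in the size×size array X. -/
def patIn {α : Type} (X : ℕ → ℕ → α) (size m n : ℕ) : Set (Pat α m n) :=
  { p | ∃ r c : ℕ, r + m ≤ size ∧ c + n ≤ size ∧
      ∀ (i : Fin m) (j : Fin n), p i j = X (r + i) (c + j) }

/-- P(T, m×n) = ⋃ₖ P(T_k, m×n). -/
def PT (m n : ℕ) : Set (Pat A16 m n) := ⋃ k : ℕ, patIn (Tfun k) (2 ^ k) m n

/-- μ applied to an m×n pattern, as a total 2m×2n array on ℕ × ℕ
(indices are reduced mod the valid range; in range this is exactly μ(p)). -/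
def muPatE {m n : ℕ} (p : Pat A16 m n) (r c : ℕ) : A16 :=
  if hm : 0 < m then
    if hn : 0 < n then
      muE (p ⟨r / 2 % m, Nat.mod_lt _ hm⟩ ⟨c / 2 % n, Nat.mod_lt _ hn⟩) r c
    else .A
  else .A

/-- μ² applied to an m×n pattern, as a total 4m×4n array on ℕ × ℕ. -/
def mu2PatE {m n : ℕ} (p : Pat A16 m n) (r c : ℕ) : A16 :=
  muE (muPatE p (r / 2) (c / 2)) r c

/-- P_{i,j}(T, m×n) = { μ(x)[i,j,m×n] : x ∈ P(T,m×n) } (1-based corner (i,j)). -/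
def Pij (i j m n : ℕ) : Set (Pat A16 m n) :=
  { q | ∃ x ∈ PT m n, ∀ (a : Fin m) (b : Fin n),
      q a b = muPatE x (i - 1 + a) (j - 1 + b) }

/-- Q_{i,j}(T, m×n) = { μ²(x)[i,j,m×n] : x ∈ P(T,m×n) } (1-based corner (i,j)). -/
def Qij (i j m n : ℕ) : Set (Pat A16 m n) :=
  { q | ∃ x ∈ PT m n, ∀ (a : Fin m) (b : Fin n),
      q a b = mu2PatE x (i - 1 + a) (j - 1 + b) }

/-- The 2×2 block substitution φ from 𝒜 to ℬ = {0,1,2,3}. -/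
def phi : A16 → Fin 2 → Fin 2 → Fin 4
  | .A => ![![0, 1], ![0, 0]]
  | .B => ![![0, 1], ![1, 1]]
  | .C => ![![1, 0], ![0, 0]]
  | .D => ![![1, 0], ![1, 1]]
  | .E => ![![0, 3], ![0, 2]]
  | .F => ![![0, 3], ![1, 3]]
  | .G => ![![1, 2], ![0, 2]]
  | .H => ![![1, 2], ![1, 3]]
  | .I => ![![2, 1], ![2, 0]]
  | .J => ![![2, 1], ![3, 1]]
  | .K => ![![3, 0], ![2, 0]]
  | .L => ![![3, 0], ![3, 1]]
  | .M => ![![2, 3], ![2, 2]]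
  | .N => ![![2, 3], ![3, 3]]
  | .O => ![![3, 2], ![2, 2]]
  | .P => ![![3, 2], ![3, 3]]

/-- Entry version of φ, indexed by arbitrary naturals (via mod 2). -/
def phiE (x : A16) (r c : ℕ) : Fin 4 :=
  phi x ⟨r % 2, by omega⟩ ⟨c % 2, by omega⟩

/-- φ applied to an m×n pattern over 𝒜, as a total 2m×2n array on ℕ × ℕ. -/
def phiPatE {m n : ℕ} (p : Pat A16 m n) (r c : ℕ) : Fin 4 :=
  if hm : 0 < m then
    if hn : 0 < n then
      phiE (p ⟨r / 2 % m, Nat.mod_lt _ hm⟩ ⟨c / 2 % n, Nat.mod_lt _ hn⟩) r c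
    else 0
  else 0

/-- φ(T_k), a 2^(k+1)×2^(k+1) array over ℬ. -/
def Sfun (k : ℕ) (r c : ℕ) : Fin 4 := phiE (Tfun k (r / 2) (c / 2)) r c

/-- P(S, m×n) = ⋃_{k≥1} P(φ(T_{k-1}), m×n). -/
def PS (m n : ℕ) : Set (Pat (Fin 4) m n) :=
  ⋃ k : ℕ, patIn (Sfun k) (2 ^ (k + 1)) m n

/-- P_{i,j}(S, m×n) = { φ(x)[i,j,m×n] : x ∈ P(T,m×n) } (1-based corner (i,j)). -/
def PSij (i j m n : ℕ) : Set (Pat (Fin 4) m n) :=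
  { q | ∃ x ∈ PT m n, ∀ (a : Fin m) (b : Fin n),
      q a b = phiPatE x (i - 1 + a) (j - 1 + b) }

/-- A_n = |P(S, n×n)|. -/
noncomputable def Acnt (n : ℕ) : ℕ := Nat.card (PS n n)

/-- a_{i,j}(n) = |P_{i,j}(T, n×n)|. -/
noncomputable def aT (i j n : ℕ) : ℕ := Nat.card (Pij i j n n)

/-- b_{i,j}(n) = |P_{i,j}(T, n×(n+1))|. -/
noncomputable def bT (i j n : ℕ) : ℕ := Nat.card (Pij i j n (n + 1))

/-- c_{i,j}(n) = |P_{i,j}(T, (n+1)×n)|. -/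
noncomputable def cT (i j n : ℕ) : ℕ := Nat.card (Pij i j (n + 1) n)


/-- xor of parity decides -/
theorem xor_decide_mod (x y : ℕ) :
    xor (decide (x % 2 = 1)) (decide (y % 2 = 1)) = decide ((x + y) % 2 = 1) := by
  rcases Nat.even_or_odd x with hx | hx <;> rcases Nat.even_or_odd y with hy | hy <;>
    simp [Nat.even_iff, Nat.odd_iff] at hx hy <;>
    simp [hx, hy, decide_eq_decide] <;> omega

def alphaF : ℕ → ℕ → Bool
  | r, c =>
    if h : r % 2 = 0 then decide ((r / 2 + c) % 2 = 1)
    else alphaF (r / 2) (c / 2)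
  decreasing_by exact Nat.div_lt_self (by omega) (by omega)

def betaF : ℕ → ℕ → Bool
  | r, c =>
    if c % 2 = 1 then decide ((r / 2 + c / 2) % 2 = 1)
    else if h : c = 0 then true
    else betaF (r / 2) (c / 2)
  decreasing_by exact Nat.div_lt_self (by omega) (by omega)

theorem alpha_even {r : ℕ} (c : ℕ) (h : r % 2 = 0) :
    alphaF r c = decide ((r / 2 + c) % 2 = 1) := by rw [alphaF]; simp [h]

theorem alpha_odd {r : ℕ} (c : ℕ) (h : r % 2 = 1) :
    alphaF r c = alphaF (r / 2) (c / 2) := by rw [alphaF]; simp [h]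

theorem beta_odd (r : ℕ) {c : ℕ} (h : c % 2 = 1) :
    betaF r c = decide ((r / 2 + c / 2) % 2 = 1) := by rw [betaF]; simp [h]

theorem beta_even (r : ℕ) {c : ℕ} (h : c % 2 = 0) (h0 : c ≠ 0) :
    betaF r c = betaF (r / 2) (c / 2) := by rw [betaF]; simp [h, h0]

/-- THE key identity -/
theorem key_identity : ∀ c, ∀ r, 1 ≤ c →
    betaF (r + 1) c = !(xor (betaF r c) (xor (alphaF r c) (alphaF r (c - 1)))) := by
  intro c
  induction c using Nat.strong_induction_on with
  | _ c IH =>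
    intro r hc
    rcases Nat.even_or_odd c with hce | hco
    · -- c even, c ≥ 2
      have hc2 : c % 2 = 0 := by simpa [Nat.even_iff] using hce
      have hcc : 2 ≤ c := by omega
      rw [beta_even (r+1) hc2 (by omega), beta_even r hc2 (by omega)]
      rcases Nat.even_or_odd r with hre | hro
      · have hr2 : r % 2 = 0 := by simpa [Nat.even_iff] using hre
        have e1 : (r + 1) / 2 = r / 2 := by omega
        rw [e1, alpha_even c hr2, alpha_even (c-1) hr2, xor_decide_mod]
        have : ((r / 2 + c) + (r / 2 + (c - 1))) % 2 = 1 := by omega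
        simp [this]
      · have hr2 : r % 2 = 1 := by simpa [Nat.odd_iff] using hro
        have e1 : (r + 1) / 2 = r / 2 + 1 := by omega
        rw [e1, IH (c/2) (by omega) (r/2) (by omega),
          alpha_odd c hr2, alpha_odd (c-1) hr2]
        have e2 : (c - 1) / 2 = c / 2 - 1 := by omega
        rw [e2]
    · -- c odd
      have hc2 : c % 2 = 1 := by simpa [Nat.odd_iff] using hco
      rw [beta_odd (r+1) hc2, beta_odd r hc2]
      rcases Nat.even_or_odd r with hre | hro
      · have hr2 : r % 2 = 0 := by simpa [Nat.even_iff] using hre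
        have e1 : (r + 1) / 2 = r / 2 := by omega
        rw [e1, alpha_even c hr2, alpha_even (c-1) hr2, xor_decide_mod]
        have : ((r / 2 + c) + (r / 2 + (c - 1))) % 2 = 1 := by omega
        simp [this]
      · have hr2 : r % 2 = 1 := by simpa [Nat.odd_iff] using hro
        have e1 : (r + 1) / 2 = r / 2 + 1 := by omega
        rw [e1, alpha_odd c hr2, alpha_odd (c-1) hr2]
        have e2 : (c - 1) / 2 = c / 2 := by omega
        rw [e2]
        simp only [Bool.xor_self, Bool.xor_false]
        rcases Nat.even_or_odd (r/2 + c/2) with h | h <;>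
          · simp [Nat.even_iff, Nat.odd_iff] at h
            have h2 : (r/2 + 1 + c/2) % 2 = (r/2 + c/2 + 1) % 2 := by omega
            simp [h2, h, Nat.add_mod_right]
            omega

def p1 : A16 → Bool
  | .A | .C | .E | .G | .I | .K | .M | .O => false
  | _ => true
def p2 : A16 → Bool
  | .C | .D | .G | .H | .K | .L | .O | .P => true
  | _ => false
def p4 : A16 → Bool
  | .E | .F | .G | .H | .M | .N | .O | .P => true
  | _ => false
def p8 : A16 → Bool
  | .I | .J | .K | .L | .M | .N | .O | .P => true
  | _ => false

instance : Fintype A16 :=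
  ⟨⟨↑[A16.A, A16.B, A16.C, A16.D, A16.E, A16.F, A16.G, A16.H, A16.I, A16.J, A16.K, A16.L,
    A16.M, A16.N, A16.O, A16.P], by decide⟩, fun x => by cases x <;> decide⟩

theorem ext16 (x y : A16) (h1 : p1 x = p1 y) (h2 : p2 x = p2 y)
    (h4 : p4 x = p4 y) (h8 : p8 x = p8 y) : x = y := by
  revert h1 h2 h4 h8; revert x y; decide

theorem p1_muE (p : A16) (r c : ℕ) :
    p1 (muE p r c) = if r % 2 = 1 then p1 p else xor (p2 p) (decide (c % 2 = 1)) := by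
  rcases Nat.mod_two_eq_zero_or_one r with hr | hr <;>
    rcases Nat.mod_two_eq_zero_or_one c with hc | hc <;>
      simp only [muE, hr, hc] <;> cases p <;> rfl

theorem p2_muE (p : A16) (r c : ℕ) :
    p2 (muE p r c) = decide (r % 2 = 1) := by
  rcases Nat.mod_two_eq_zero_or_one r with hr | hr <;>
    rcases Nat.mod_two_eq_zero_or_one c with hc | hc <;>
      simp only [muE, hr, hc] <;> cases p <;> rfl

theorem p4_muE (p : A16) (r c : ℕ) :
    p4 (muE p r c) = decide ((r + c) % 2 = 1) := by
  rcases Nat.mod_two_eq_zero_or_one r with hr | hr <;>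
    rcases Nat.mod_two_eq_zero_or_one c with hc | hc <;>
      [skip; skip; skip; skip] <;>
      · have : (r + c) % 2 = (r % 2 + c % 2) % 2 := by omega
        simp only [muE, hr, hc, this] <;> cases p <;> rfl

theorem p8_muE (p : A16) (r c : ℕ) :
    p8 (muE p r c) = if c % 2 = 1 then p4 p else p8 p := by
  rcases Nat.mod_two_eq_zero_or_one r with hr | hr <;>
    rcases Nat.mod_two_eq_zero_or_one c with hc | hc <;>
      simp only [muE, hr, hc] <;> cases p <;> rfl

theorem Tfun_succ (K r c : ℕ) : Tfun (K + 1) r c = muE (Tfun K (r / 2) (c / 2)) r c := rfl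

theorem p2T (K r c : ℕ) : p2 (Tfun (K + 1) r c) = decide (r % 2 = 1) := by
  rw [Tfun_succ, p2_muE]

theorem p4T (K r c : ℕ) : p4 (Tfun (K + 1) r c) = decide ((r + c) % 2 = 1) := by
  rw [Tfun_succ, p4_muE]

theorem p1T : ∀ K, ∀ r c : ℕ, r + 2 ≤ 2 ^ (K + 1) → p1 (Tfun (K + 1) r c) = alphaF r c := by
  intro K
  induction K with
  | zero =>
    intro r c hr
    have : r = 0 := by simp at hr; omega
    subst this
    rw [Tfun_succ, p1_muE]
    simp only [Nat.zero_mod, Nat.zero_div]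
    rw [alpha_even c rfl]
    show xor (p2 (Tfun 0 0 (c/2))) _ = _
    show xor (p2 A16.N) _ = _
    simp [p2]
  | succ K IH =>
    intro r c hr
    rw [Tfun_succ, p1_muE]
    rcases Nat.mod_two_eq_zero_or_one r with h | h
    · rw [if_neg (by omega : ¬ r % 2 = 1), p2T, xor_decide_mod, alpha_even c h]
    · rw [if_pos h]
      have hpow : (2:ℕ) ^ (K + 1 + 1) = 2 * 2 ^ (K + 1) := by ring
      rw [IH (r/2) (c/2) (by omega), alpha_odd c h]

theorem p8T : ∀ K, ∀ r c : ℕ, 1 ≤ c → c < 2 ^ (K + 1) → p8 (Tfun (K + 2) r c) = betaF r c := by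
  intro K
  induction K with
  | zero =>
    intro r c h1 h2
    have : c = 1 := by simp at h2; omega
    subst this
    rw [Tfun_succ, p8_muE]
    rw [if_pos (by norm_num : (1:ℕ) % 2 = 1), p4T, beta_odd r (by norm_num)]
  | succ K IH =>
    intro r c h1 h2
    rw [Tfun_succ, p8_muE]
    rcases Nat.mod_two_eq_zero_or_one c with h | h
    · have hpow : (2:ℕ) ^ (K + 1 + 1) = 2 * 2 ^ (K + 1) := by ring
      rw [if_neg (by omega : ¬ c % 2 = 1),
        IH (r/2) (c/2) (by omega) (by omega), beta_even r h (by omega)]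
    · rw [if_pos h, p4T, beta_odd r h]

theorem muE_congr (p : A16) {r c r' c' : ℕ} (h1 : r % 2 = r' % 2) (h2 : c % 2 = c' % 2) :
    muE p r c = muE p r' c' := by
  unfold muE
  congr 1 <;> exact Fin.ext (by simp [h1, h2])

theorem superE_mod : ∀ n (x : A16) (r c : ℕ),
    superE n x r c = superE n x (r % 2 ^ n) (c % 2 ^ n) := by
  intro n
  induction n with
  | zero => intro x r c; rfl
  | succ n IH =>
    intro x r c
    show muE (superE n x (r/2) (c/2)) r c
       = muE (superE n x ((r % 2^(n+1))/2) ((c % 2^(n+1))/2)) (r % 2^(n+1)) (c % 2^(n+1))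
    have hp : (2:ℕ)^(n+1) = 2 * 2^n := by ring
    have er : (r % 2^(n+1)) / 2 = (r / 2) % 2 ^ n := by
      rw [hp, Nat.mod_mul_right_div_self]
    have ec : (c % 2^(n+1)) / 2 = (c / 2) % 2 ^ n := by
      rw [hp, Nat.mod_mul_right_div_self]
    rw [er, ec, ← IH]
    have hd : (2:ℕ) ∣ 2 ^ (n+1) := ⟨2 ^ n, by ring⟩
    exact muE_congr _ (Nat.mod_mod_of_dvd r hd).symm (Nat.mod_mod_of_dvd c hd).symm

theorem superE_add : ∀ b a (x : A16) (r c : ℕ),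
    superE (a + b) x r c = superE b (superE a x (r / 2 ^ b) (c / 2 ^ b)) r c := by
  intro b
  induction b with
  | zero => intro a x r c; simp [superE]
  | succ b IH =>
    intro a x r c
    show muE (superE (a + b) x (r/2) (c/2)) r c = _
    rw [IH a x (r/2) (c/2)]
    have er : r / 2 / 2 ^ b = r / 2 ^ (b+1) := by
      rw [Nat.div_div_eq_div_mul]; congr 1; ring
    have ec : c / 2 / 2 ^ b = c / 2 ^ (b+1) := by
      rw [Nat.div_div_eq_div_mul]; congr 1; ring
    rw [er, ec]
    rfl

theorem Tfun00 : ∀ s, Tfun (s + 1) 0 0 = A16.I := by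
  intro s
  induction s with
  | zero => decide
  | succ s IH =>
    show muE (Tfun (s+1) 0 0) 0 0 = A16.I
    rw [IH]; decide

theorem Tfun01 : ∀ s, Tfun (s + 1) 0 1 = if s = 0 then A16.N else A16.F := by
  intro s
  cases s with
  | zero => decide
  | succ s =>
    show muE (Tfun (s+1) 0 0) 0 1 = _
    rw [Tfun00]; simp; decide

theorem Tfun03 : ∀ s, Tfun (s + 2) 0 3 = A16.N := by
  intro s
  show muE (Tfun (s+1) 0 1) 0 3 = A16.N
  rw [Tfun01]
  cases s with
  | zero => decide
  | succ s => simp; decide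

theorem embed_once (k r c : ℕ) (hr : r < 2 ^ k) (hc : c < 2 ^ k) :
    Tfun (k + 3) r (c + 3 * 2 ^ k) = Tfun k r c := by
  have h0 : (0:ℕ) < 2 ^ k := Nat.two_pow_pos k
  show superE (k + 3) A16.N r (c + 3 * 2 ^ k) = superE k A16.N r c
  rw [show k + 3 = 3 + k from by omega, superE_add k 3 A16.N]
  have er : r / 2 ^ k = 0 := Nat.div_eq_of_lt hr
  have ec : (c + 3 * 2 ^ k) / 2 ^ k = 3 := by
    rw [Nat.add_mul_div_right _ _ h0, Nat.div_eq_of_lt hc]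
  rw [er, ec]
  have : superE 3 A16.N 0 3 = A16.N := Tfun03 1
  rw [this, superE_mod k A16.N r (c + 3 * 2 ^ k)]
  have emr : r % 2 ^ k = r := Nat.mod_eq_of_lt hr
  have emc : (c + 3 * 2 ^ k) % 2 ^ k = c := by
    rw [Nat.add_mul_mod_self_right, Nat.mod_eq_of_lt hc]
  rw [emr, emc]

theorem core_lemma (n r c r' c' : ℕ) (hn : 1 ≤ n)
    (Hα : ∀ a b : ℕ, a ≤ 4*n → b ≤ 4*n+1 →
       alphaF (4*r+3+a) (4*c+3+b) = alphaF (4*r'+3+a) (4*c'+3+b))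
    (Hβ : ∀ a b : ℕ, a ≤ 4*n → b ≤ 4*n+1 →
       betaF (4*r+3+a) (4*c+3+b) = betaF (4*r'+3+a) (4*c'+3+b)) :
    ∀ a b : ℕ, a ≤ 4*n+6 → b ≤ 4*n+6 →
      alphaF (4*r+a) (4*c+1+b) = alphaF (4*r'+a) (4*c'+1+b)
      ∧ betaF (4*r+a) (4*c+1+b) = betaF (4*r'+a) (4*c'+1+b) := by
  -- level-2 alpha grid
  have hA2 : ∀ i j : ℕ, i ≤ n → j ≤ n+1 → alphaF (r+i) (c+j) = alphaF (r'+i) (c'+j) := by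
    intro i j hi hj
    rcases Nat.eq_zero_or_pos j with hj0 | hj1
    · subst hj0
      have h := Hα (4*i) 0 (by omega) (by omega)
      rw [alpha_odd _ (show (4*r+3+4*i) % 2 = 1 by omega),
          alpha_odd _ (show (4*r+3+4*i)/2 % 2 = 1 by omega),
          alpha_odd _ (show (4*r'+3+4*i) % 2 = 1 by omega),
          alpha_odd _ (show (4*r'+3+4*i)/2 % 2 = 1 by omega)] at h
      rw [show (4*r+3+4*i)/2/2 = r + i by omega, show (4*c+3+0)/2/2 = c by omega,
          show (4*r'+3+4*i)/2/2 = r' + i by omega, show (4*c'+3+0)/2/2 = c' by omega] at h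
      simpa using h
    · have h := Hα (4*i) (4*j-3) (by omega) (by omega)
      rw [alpha_odd _ (show (4*r+3+4*i) % 2 = 1 by omega),
          alpha_odd _ (show (4*r+3+4*i)/2 % 2 = 1 by omega),
          alpha_odd _ (show (4*r'+3+4*i) % 2 = 1 by omega),
          alpha_odd _ (show (4*r'+3+4*i)/2 % 2 = 1 by omega)] at h
      rw [show (4*r+3+4*i)/2/2 = r + i by omega, show (4*c+3+(4*j-3))/2/2 = c + j by omega,
          show (4*r'+3+4*i)/2/2 = r' + i by omega,
          show (4*c'+3+(4*j-3))/2/2 = c' + j by omega] at h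
      exact h
  -- level-2 beta grid
  have hB2 : ∀ i j : ℕ, i ≤ n → 1 ≤ j → j ≤ n+1 → betaF (r+i) (c+j) = betaF (r'+i) (c'+j) := by
    intro i j hi hj1 hj
    have h := Hβ (4*i) (4*j-3) (by omega) (by omega)
    rw [beta_even _ (show (4*c+3+(4*j-3)) % 2 = 0 by omega) (by omega),
        beta_even _ (show (4*c+3+(4*j-3))/2 % 2 = 0 by omega) (by omega),
        beta_even _ (show (4*c'+3+(4*j-3)) % 2 = 0 by omega) (by omega),
        beta_even _ (show (4*c'+3+(4*j-3))/2 % 2 = 0 by omega) (by omega)] at h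
    rw [show (4*r+3+4*i)/2/2 = r + i by omega, show (4*c+3+(4*j-3))/2/2 = c + j by omega,
        show (4*r'+3+4*i)/2/2 = r' + i by omega,
        show (4*c'+3+(4*j-3))/2/2 = c' + j by omega] at h
    exact h
  -- parities
  have hr2 : r % 2 = r' % 2 := by
    have h := Hα 2 0 (by omega) (by omega)
    rw [alpha_odd _ (show (4*r+3+2) % 2 = 1 by omega),
        alpha_even _ (show (4*r+3+2)/2 % 2 = 0 by omega),
        alpha_odd _ (show (4*r'+3+2) % 2 = 1 by omega),
        alpha_even _ (show (4*r'+3+2)/2 % 2 = 0 by omega)] at h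
    rw [decide_eq_decide] at h
    omega
  have hrc : (r + c) % 2 = (r' + c') % 2 := by
    have h := Hβ 0 3 (by omega) (by omega)
    rw [beta_even _ (show (4*c+3+3) % 2 = 0 by omega) (by omega),
        beta_odd _ (show (4*c+3+3)/2 % 2 = 1 by omega),
        beta_even _ (show (4*c'+3+3) % 2 = 0 by omega) (by omega),
        beta_odd _ (show (4*c'+3+3)/2 % 2 = 1 by omega)] at h
    rw [decide_eq_decide] at h
    omega
  -- extension row (r+n+1) for beta
  have hB3 : ∀ j : ℕ, 1 ≤ j → j ≤ n+1 → betaF (r+n+1) (c+j) = betaF (r'+n+1) (c'+j) := by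
    intro j hj1 hj
    have hk := key_identity (c+j) (r+n) (by omega)
    have hk' := key_identity (c'+j) (r'+n) (by omega)
    rw [show r+n+1 = r+n+1 from rfl] at hk
    rw [hk, hk', show c + j - 1 = c + (j-1) by omega, show c' + j - 1 = c' + (j-1) by omega,
        hB2 n j (le_refl n) hj1 hj, hA2 n j (le_refl n) (by omega),
        hA2 n (j-1) (le_refl n) (by omega)]
  -- main reconstruction
  intro a b ha hb
  constructor
  · -- alpha goal
    rcases Nat.mod_two_eq_zero_or_one a with h | h
    · rw [alpha_even _ (show (4*r+a) % 2 = 0 by omega),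
          alpha_even _ (show (4*r'+a) % 2 = 0 by omega), decide_eq_decide]
      omega
    · rw [alpha_odd _ (show (4*r+a) % 2 = 1 by omega),
          alpha_odd _ (show (4*r'+a) % 2 = 1 by omega)]
      rcases Nat.mod_two_eq_zero_or_one (a/2) with h2 | h2
      · rw [alpha_even _ (show (4*r+a)/2 % 2 = 0 by omega),
            alpha_even _ (show (4*r'+a)/2 % 2 = 0 by omega), decide_eq_decide]
        omega
      · rw [alpha_odd _ (show (4*r+a)/2 % 2 = 1 by omega),
            alpha_odd _ (show (4*r'+a)/2 % 2 = 1 by omega)]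
        rw [show (4*r+a)/2/2 = r + a/2/2 by omega, show (4*c+1+b)/2/2 = c + (1+b)/2/2 by omega,
            show (4*r'+a)/2/2 = r' + a/2/2 by omega,
            show (4*c'+1+b)/2/2 = c' + (1+b)/2/2 by omega]
        exact hA2 _ _ (by omega) (by omega)
  · -- beta goal
    rcases Nat.mod_two_eq_zero_or_one b with h | h
    · rw [beta_odd _ (show (4*c+1+b) % 2 = 1 by omega),
          beta_odd _ (show (4*c'+1+b) % 2 = 1 by omega), decide_eq_decide]
      omega
    · rw [beta_even _ (show (4*c+1+b) % 2 = 0 by omega) (by omega),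
          beta_even _ (show (4*c'+1+b) % 2 = 0 by omega) (by omega)]
      rcases Nat.mod_two_eq_zero_or_one ((1+b)/2) with h2 | h2
      · -- next level col even: descend again
        rw [beta_even _ (show (4*c+1+b)/2 % 2 = 0 by omega) (by omega),
            beta_even _ (show (4*c'+1+b)/2 % 2 = 0 by omega) (by omega)]
        rw [show (4*r+a)/2/2 = r + a/2/2 by omega, show (4*c+1+b)/2/2 = c + (1+b)/2/2 by omega,
            show (4*r'+a)/2/2 = r' + a/2/2 by omega,
            show (4*c'+1+b)/2/2 = c' + (1+b)/2/2 by omega]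
        by_cases hi : a/2/2 ≤ n
        · exact hB2 _ _ hi (by omega) (by omega)
        · have hieq : a/2/2 = n+1 := by omega
          rw [hieq, show r + (n+1) = r+n+1 by omega, show r' + (n+1) = r'+n+1 by omega]
          exact hB3 _ (by omega) (by omega)
      · rw [beta_odd _ (show (4*c+1+b)/2 % 2 = 1 by omega),
            beta_odd _ (show (4*c'+1+b)/2 % 2 = 1 by omega), decide_eq_decide]
        omega

theorem mem_PT {m n : ℕ} (x : Pat A16 m n) :
    x ∈ PT m n ↔ ∃ k r c : ℕ, r + m ≤ 2^k ∧ c + n ≤ 2^k ∧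
      ∀ (i : Fin m) (j : Fin n), x i j = Tfun k (r + ↑i) (c + ↑j) := by
  constructor
  · intro hx
    obtain ⟨k, hk⟩ := Set.mem_iUnion.mp hx
    obtain ⟨r, c, h1, h2, h3⟩ := hk
    exact ⟨k, r, c, h1, h2, h3⟩
  · rintro ⟨k, r, c, h1, h2, h3⟩
    exact Set.mem_iUnion.mpr ⟨k, r, c, h1, h2, h3⟩

theorem mu2PatE_eval {m n : ℕ} (hm : 0 < m) (hn : 0 < n) (p : Pat A16 m n) (u v : ℕ) :
    mu2PatE p u v
      = muE (muE (p ⟨u/4 % m, Nat.mod_lt _ hm⟩ ⟨v/4 % n, Nat.mod_lt _ hn⟩) (u/2) (v/2)) u v := by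
  unfold mu2PatE muPatE
  rw [dif_pos hm, dif_pos hn]
  have e1 : u/2/2 = u/4 := by omega
  have e2 : v/2/2 = v/4 := by omega
  congr 2 <;> simp [e1, e2]

theorem bridge {m n : ℕ} (hm : 0 < m) (hn : 0 < n) (k : ℕ) (x : Pat A16 m n) (r c : ℕ)
    (hx : ∀ (i : Fin m) (j : Fin n), x i j = Tfun k (r + ↑i) (c + ↑j))
    (u v : ℕ) (hu : u/4 < m) (hv : v/4 < n) :
    mu2PatE x u v = Tfun (k+2) (4*r+u) (4*c+v) := by
  rw [mu2PatE_eval hm hn]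
  have h1 : Tfun (k+2) (4*r+u) (4*c+v)
      = muE (muE (Tfun k ((4*r+u)/2/2) ((4*c+v)/2/2)) ((4*r+u)/2) ((4*c+v)/2))
          (4*r+u) (4*c+v) := rfl
  rw [h1, show (4*r+u)/2/2 = r + u/4 by omega, show (4*c+v)/2/2 = c + v/4 by omega]
  have hx' : x ⟨u/4 % m, Nat.mod_lt _ hm⟩ ⟨v/4 % n, Nat.mod_lt _ hn⟩
      = Tfun k (r + u/4) (c + v/4) := by
    rw [hx]
    congr 2 <;> simp [Nat.mod_eq_of_lt hu, Nat.mod_eq_of_lt hv]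
  rw [hx']
  have hinner : muE (Tfun k (r + u/4) (c + v/4)) (u/2) (v/2)
      = muE (Tfun k (r + u/4) (c + v/4)) ((4*r+u)/2) ((4*c+v)/2) :=
    muE_congr _ (by omega) (by omega)
  rw [hinner]
  exact muE_congr _ (by omega) (by omega)

theorem good_occ {N : ℕ} (hN : 0 < N) (x : Pat A16 N N) (hx : x ∈ PT N N) :
    ∃ k r c : ℕ, (∀ (i : Fin N) (j : Fin N), x i j = Tfun k (r + ↑i) (c + ↑j)) ∧
      r + N ≤ 2^k ∧ 4*(c+N) ≤ 2^(k+1) ∧ 1 ≤ c := by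
  obtain ⟨k0, r0, c0, h1, h2, h3⟩ := (mem_PT x).mp hx
  have hp3 : (2:ℕ)^(k0+3) = 8 * 2^k0 := by ring
  have hp6 : (2:ℕ)^(k0+6) = 64 * 2^k0 := by ring
  have hp7 : (2:ℕ)^(k0+6+1) = 128 * 2^k0 := by ring
  have hpos : (1:ℕ) ≤ 2^k0 := Nat.one_le_two_pow
  refine ⟨k0+6, r0, c0 + 3*2^k0 + 3*2^(k0+3), ?_, by omega, by omega, by omega⟩
  intro i j
  have hi := i.isLt
  have hj := j.isLt
  rw [h3 i j]
  have e1 : Tfun (k0+3) (r0+↑i) ((c0+↑j) + 3*2^k0) = Tfun k0 (r0+↑i) (c0+↑j) :=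
    embed_once k0 _ _ (by omega) (by omega)
  have e2 : Tfun (k0+3+3) (r0+↑i) ((c0+↑j+3*2^k0) + 3*2^(k0+3)) = Tfun (k0+3) (r0+↑i) (c0+↑j+3*2^k0) :=
    embed_once (k0+3) _ _ (by omega) (by omega)
  have ecol : c0 + 3*2^k0 + 3*2^(k0+3) + ↑j = (c0+↑j+3*2^k0) + 3*2^(k0+3) := by ring
  rw [ecol, show k0+6 = k0+3+3 from rfl, e2, e1]

/-- restriction map from (4n+7)×(4n+7) patterns to (4n+1)×(4n+2) patterns at offset (3,2) -/
def restrictPat (n : ℕ) (q : Pat A16 (4*n+7) (4*n+7)) : Pat A16 (4*n+1) (4*n+2) :=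
  fun a b => q ⟨3+a.1, by have := a.isLt; omega⟩ ⟨2+b.1, by have := b.isLt; omega⟩

def subPat (n : ℕ) (x : Pat A16 (4*n+7) (4*n+7)) : Pat A16 (4*n+1) (4*n+2) :=
  fun a b => x ⟨a.1, by have := a.isLt; omega⟩ ⟨b.1, by have := b.isLt; omega⟩

def extPat (n K R C : ℕ) : Pat A16 (4*n+7) (4*n+7) := fun i j => Tfun K (R+↑i) (C+↑j)

set_option maxHeartbeats 2000000 in
/-- Lemma 4.5: |Q_{4,4}(T, (4n+1)×(4n+2))| = |Q_{1,2}(T, (4n+7)×(4n+7))|. -/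
theorem Q_extension (n : ℕ) (hn : 1 ≤ n) :
    Nat.card (Qij 4 4 (4 * n + 1) (4 * n + 2)) =
      Nat.card (Qij 1 2 (4 * n + 7) (4 * n + 7)) := by
  suffices hbij : Set.BijOn (restrictPat n) (Qij 1 2 (4*n+7) (4*n+7)) (Qij 4 4 (4*n+1) (4*n+2)) by
    exact (Nat.card_congr (Set.BijOn.equiv (restrictPat n) hbij)).symm
  refine ⟨?_, ?_, ?_⟩
  · -- MapsTo
    rintro q ⟨x, hxPT, hqe⟩
    obtain ⟨k, r, c, hrk, hck, hx⟩ := (mem_PT x).mp hxPT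
    have hsub : ∀ (i : Fin (4*n+1)) (j : Fin (4*n+2)),
        subPat n x i j = Tfun k (r + ↑i) (c + ↑j) := fun i j => hx _ _
    refine ⟨subPat n x, (mem_PT _).mpr ⟨k, r, c, by omega, by omega, hsub⟩, ?_⟩
    intro a b
    have ha := a.isLt; have hb := b.isLt
    show q ⟨3+↑a, by omega⟩ ⟨2+↑b, by omega⟩ = _
    rw [hqe ⟨3+↑a, by omega⟩ ⟨2+↑b, by omega⟩]
    show mu2PatE x (1-1+(3+↑a)) (2-1+(2+↑b)) = mu2PatE (subPat n x) (4-1+↑a) (4-1+↑b)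
    rw [show (1:ℕ)-1+(3+↑a) = 3+↑a by omega, show (2:ℕ)-1+(2+↑b) = 3+↑b by omega,
        show (4:ℕ)-1+↑a = 3+↑a by omega, show (4:ℕ)-1+↑b = 3+↑b by omega,
        bridge (by omega) (by omega) k x r c hx (3+↑a) (3+↑b) (by omega) (by omega),
        bridge (by omega) (by omega) k (subPat n x) r c hsub (3+↑a) (3+↑b) (by omega) (by omega)]
  · -- InjOn
    rintro q ⟨x, hxPT, hqe⟩ q' ⟨x', hxPT', hqe'⟩ heq
    obtain ⟨k, r, c, hx, hA, hB, hC⟩ := good_occ (by omega) x hxPT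
    obtain ⟨k', r', c', hx', hA', hB', hC'⟩ := good_occ (by omega) x' hxPT'
    have hp2 : (2:ℕ)^(k+2) = 4*2^k := by ring
    have hp1 : (2:ℕ)^(k+1) = 2*2^k := by ring
    have hp2' : (2:ℕ)^(k'+2) = 4*2^k' := by ring
    have hp1' : (2:ℕ)^(k'+1) = 2*2^k' := by ring
    have qeval : ∀ u v : ℕ, (hu : u < 4*n+7) → (hv : v < 4*n+7) →
        q ⟨u, hu⟩ ⟨v, hv⟩ = Tfun (k+2) (4*r+u) (4*c+1+v) := by
      intro u v hu hv
      rw [hqe ⟨u, hu⟩ ⟨v, hv⟩]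
      show mu2PatE x (1-1+u) (2-1+v) = _
      rw [show (1:ℕ)-1+u = u by omega, show (2:ℕ)-1+v = 1+v by omega,
          bridge (by omega) (by omega) k x r c hx u (1+v) (by omega) (by omega),
          show 4*c+(1+v) = 4*c+1+v by omega]
    have q'eval : ∀ u v : ℕ, (hu : u < 4*n+7) → (hv : v < 4*n+7) →
        q' ⟨u, hu⟩ ⟨v, hv⟩ = Tfun (k'+2) (4*r'+u) (4*c'+1+v) := by
      intro u v hu hv
      rw [hqe' ⟨u, hu⟩ ⟨v, hv⟩]
      show mu2PatE x' (1-1+u) (2-1+v) = _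
      rw [show (1:ℕ)-1+u = u by omega, show (2:ℕ)-1+v = 1+v by omega,
          bridge (by omega) (by omega) k' x' r' c' hx' u (1+v) (by omega) (by omega),
          show 4*c'+(1+v) = 4*c'+1+v by omega]
    have HL : ∀ a b : ℕ, a ≤ 4*n → b ≤ 4*n+1 →
        Tfun (k+2) (4*r+3+a) (4*c+3+b) = Tfun (k'+2) (4*r'+3+a) (4*c'+3+b) := by
      intro a b ha hb
      have h : q ⟨3+a, by omega⟩ ⟨2+b, by omega⟩ = q' ⟨3+a, by omega⟩ ⟨2+b, by omega⟩ :=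
        congrFun (congrFun heq ⟨a, by omega⟩) ⟨b, by omega⟩
      have t := (qeval (3+a) (2+b) (by omega) (by omega)).symm.trans
        (h.trans (q'eval (3+a) (2+b) (by omega) (by omega)))
      rw [show 4*r+(3+a) = 4*r+3+a by omega, show 4*c+1+(2+b) = 4*c+3+b by omega,
          show 4*r'+(3+a) = 4*r'+3+a by omega, show 4*c'+1+(2+b) = 4*c'+3+b by omega] at t
      exact t
    have Hα : ∀ a b : ℕ, a ≤ 4*n → b ≤ 4*n+1 →
        alphaF (4*r+3+a) (4*c+3+b) = alphaF (4*r'+3+a) (4*c'+3+b) := by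
      intro a b ha hb
      have h := congrArg p1 (HL a b ha hb)
      rwa [show k+2 = (k+1)+1 from rfl, show k'+2 = (k'+1)+1 from rfl,
        p1T (k+1) _ _ (by omega), p1T (k'+1) _ _ (by omega)] at h
    have Hβ : ∀ a b : ℕ, a ≤ 4*n → b ≤ 4*n+1 →
        betaF (4*r+3+a) (4*c+3+b) = betaF (4*r'+3+a) (4*c'+3+b) := by
      intro a b ha hb
      have h := congrArg p8 (HL a b ha hb)
      rwa [p8T k _ _ (by omega) (by omega), p8T k' _ _ (by omega) (by omega)] at h
    have CORE := core_lemma n r c r' c' hn Hα Hβ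
    funext a b
    have ha := a.isLt; have hb := b.isLt
    rw [show q a b = q ⟨↑a, ha⟩ ⟨↑b, hb⟩ from rfl, qeval ↑a ↑b ha hb,
        show q' a b = q' ⟨↑a, ha⟩ ⟨↑b, hb⟩ from rfl, q'eval ↑a ↑b ha hb]
    apply ext16
    · rw [show k+2 = (k+1)+1 from rfl, show k'+2 = (k'+1)+1 from rfl,
        p1T (k+1) _ _ (by omega), p1T (k'+1) _ _ (by omega)]
      exact (CORE ↑a ↑b (by omega) (by omega)).1
    · rw [show k+2 = (k+1)+1 from rfl, show k'+2 = (k'+1)+1 from rfl, p2T, p2T,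
        decide_eq_decide]
      omega
    · rw [show k+2 = (k+1)+1 from rfl, show k'+2 = (k'+1)+1 from rfl, p4T, p4T,
        decide_eq_decide]
      omega
    · rw [p8T k _ _ (by omega) (by omega), p8T k' _ _ (by omega) (by omega)]
      exact (CORE ↑a ↑b (by omega) (by omega)).2
  · -- SurjOn
    rintro p44 ⟨x, hxPT, hpe⟩
    obtain ⟨k, r, c, hrk, hck, hx⟩ := (mem_PT x).mp hxPT
    have hpos : (1:ℕ) ≤ 2^k := Nat.one_le_two_pow
    have hp3 : (2:ℕ)^(k+3) = 8*2^k := by ring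
    have hp2 : (2:ℕ)^(k+2) = 4*2^k := by ring
    have hext : ∀ (i j : Fin (4*n+7)),
        extPat n (k+3) r (c+3*2^k) i j = Tfun (k+3) (r+↑i) ((c+3*2^k)+↑j) := fun i j => rfl
    refine ⟨fun a b => mu2PatE (extPat n (k+3) r (c+3*2^k)) (1-1+↑a) (2-1+↑b),
      ⟨extPat n (k+3) r (c+3*2^k),
        (mem_PT _).mpr ⟨k+3, r, c+3*2^k, by omega, by omega, hext⟩,
        fun a b => rfl⟩, ?_⟩
    funext a b
    have ha := a.isLt; have hb := b.isLt
    show mu2PatE (extPat n (k+3) r (c+3*2^k)) (1-1+(3+↑a)) (2-1+(2+↑b)) = p44 a b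
    rw [hpe a b,
        show (1:ℕ)-1+(3+↑a) = 3+↑a by omega, show (2:ℕ)-1+(2+↑b) = 3+↑b by omega,
        show (4:ℕ)-1+↑a = 3+↑a by omega, show (4:ℕ)-1+↑b = 3+↑b by omega,
        bridge (by omega) (by omega) (k+3) (extPat n (k+3) r (c+3*2^k)) r (c+3*2^k) hext
          (3+↑a) (3+↑b) (by omega) (by omega),
        bridge (by omega) (by omega) k x r c hx (3+↑a) (3+↑b) (by omega) (by omega)]
    have hrow : 4*r+(3+↑a) < 2^(k+2) := by omega
    have hcol : 4*c+(3+↑b) < 2^(k+2) := by omega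
    rw [show 4*(c+3*2^k)+(3+↑b) = (4*c+(3+↑b)) + 3*2^(k+2) by ring,
        show (k+3)+2 = (k+2)+3 by omega]
    apply embed_once _ _ _ hrow hcol
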